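/- Fix an integer R ≥ 2. With n₁ = ⌊n/R⌋ and the sequences a_n := (1/2)·(x·2^{n-n₁+1}/(b_{n-n₁}(R-1)+b_{n-n₁}(R-2)))·(2^{n₁}·C(n,≤R))/(C(n₁,≤1)·2^n), we have limsup_{n→∞} a_n = x·(R/(R-1))^{R-1} ≤ e·x for any fixed x > 0. -/

import Mathlib

open Filter Finset

private lemma tendsto_choose_div_pow (i : ℕ) :
    Tendsto (fun n : ℕ => (n.choose i : ℝ) / (n : ℝ) ^ i) atTop
      (nhds (1 / (Nat.factorial i))) := by
  have h1 : Tendsto (fun n : ℕ => (∏ j ∈ range i, (1 - (j : ℝ) / n)) / (Nat.factorial i))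
      atTop (nhds (1 / (Nat.factorial i))) := by
    apply Tendsto.div_const
    have : Tendsto (fun n : ℕ => (∏ j ∈ range i, (1 - (j : ℝ) / n))) atTop
        (nhds (∏ j ∈ range i, (1:ℝ))) := by
      apply tendsto_finset_prod
      intro j _
      have : Tendsto (fun n : ℕ => (j : ℝ) / n) atTop (nhds 0) :=
        Tendsto.div_atTop tendsto_const_nhds tendsto_natCast_atTop_atTop
      simpa using (tendsto_const_nhds (x := (1:ℝ))).sub this
    simpa using this
  apply h1.congr' ?_
  filter_upwards [eventually_ge_atTop (max i 1)] with n hn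
  have hni : i ≤ n := le_trans (le_max_left _ _) hn
  have hn1 : 1 ≤ n := le_trans (le_max_right _ _) hn
  have hn0 : (n : ℝ) ≠ 0 := by positivity
  have hd : ((n.descFactorial i : ℕ) : ℝ) = ∏ j ∈ range i, ((n : ℝ) - j) := by
    rw [Nat.descFactorial_eq_prod_range, Nat.cast_prod]
    apply Finset.prod_congr rfl
    intro j hj
    have : j ≤ n := le_trans (le_of_lt (Finset.mem_range.mp hj)) hni
    push_cast [this] ; ring
  have hc : (n.choose i : ℝ) = (∏ j ∈ range i, ((n : ℝ) - j)) / (Nat.factorial i) := by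
    rw [← hd]
    have := Nat.descFactorial_eq_factorial_mul_choose n i
    field_simp
    rw [mul_comm]
    exact_mod_cast congrArg (Nat.cast : ℕ → ℝ) this.symm
  rw [hc]
  rw [div_div, mul_comm ((Nat.factorial i : ℝ)), ← div_div]
  congr 1
  rw [eq_div_iff (by positivity : ((n:ℝ))^i ≠ 0),
    show ((n:ℝ))^i = ∏ _j ∈ range i, (n:ℝ) from by simp, ← Finset.prod_mul_distrib]
  apply Finset.prod_congr rfl
  intro j _
  field_simp

private lemma tendsto_choose_div_pow_lt (i k : ℕ) (h : i < k) :
    Tendsto (fun n : ℕ => (n.choose i : ℝ) / (n : ℝ) ^ k) atTop (nhds 0) := by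
  have h2 : Tendsto (fun n : ℕ => ((1:ℝ) / n) ^ (k - i)) atTop (nhds 0) := by
    have := (tendsto_one_div_atTop_nhds_zero_nat : Tendsto (fun n : ℕ => (1:ℝ) / n) atTop (nhds 0)).pow (k - i)
    simpa [zero_pow (Nat.sub_ne_zero_of_lt h)] using this
  have hmul := (tendsto_choose_div_pow i).mul h2
  rw [mul_zero] at hmul
  apply hmul.congr'
  filter_upwards [eventually_ge_atTop 1] with n hn
  have hn0 : (n : ℝ) ≠ 0 := by positivity
  rw [div_pow, one_pow, div_mul_div_comm, mul_one, ← pow_add, Nat.add_sub_cancel' h.le]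

private lemma tendsto_sum_choose_div_pow (k : ℕ) :
    Tendsto (fun n : ℕ => (∑ i ∈ range (k + 1), (n.choose i : ℝ)) / (n : ℝ) ^ k) atTop
      (nhds (1 / (Nat.factorial k))) := by
  have key : ∀ i ∈ range (k + 1), Tendsto (fun n : ℕ => (n.choose i : ℝ) / (n : ℝ) ^ k) atTop
      (nhds (if i = k then (1 / (Nat.factorial k) : ℝ) else 0)) := by
    intro i hi
    rcases eq_or_lt_of_le (Nat.lt_succ_iff.mp (mem_range.mp hi)) with h | h
    · subst h; simp only [if_pos rfl]; exact tendsto_choose_div_pow i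
    · simp only [if_neg h.ne]; exact tendsto_choose_div_pow_lt i k h
  have hsum := tendsto_finset_sum (range (k + 1)) key
  have heq : ∑ i ∈ range (k + 1), (if i = k then (1 / (Nat.factorial k) : ℝ) else 0)
      = 1 / (Nat.factorial k) := by
    rw [Finset.sum_ite_eq' (range (k + 1)) k]
    simp
  rw [heq] at hsum
  apply hsum.congr
  intro n
  rw [Finset.sum_div]

private lemma mod_div_tendsto (R : ℕ) (hR : 2 ≤ R) :
    Tendsto (fun n : ℕ => ((n % R : ℕ) : ℝ) / n) atTop (nhds 0) := by
  have hub : Tendsto (fun n : ℕ => (R : ℝ) / n) atTop (nhds 0) :=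
    Tendsto.div_atTop tendsto_const_nhds tendsto_natCast_atTop_atTop
  apply squeeze_zero (fun n => by positivity) (fun n => ?_) hub
  rw [div_eq_mul_inv, div_eq_mul_inv]
  apply mul_le_mul_of_nonneg_right _ (by positivity)
  exact_mod_cast (Nat.mod_lt n (by omega)).le

private lemma div_floor_tendsto (R : ℕ) (hR : 2 ≤ R) :
    Tendsto (fun n : ℕ => ((n / R : ℕ) : ℝ) / n) atTop (nhds (1 / R)) := by
  have hmod := mod_div_tendsto R hR
  have h : Tendsto (fun n : ℕ => ((1 : ℝ) - ((n % R : ℕ) : ℝ) / n) / R) atTop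
      (nhds ((1 - 0) / R)) := (tendsto_const_nhds.sub hmod).div_const _
  rw [sub_zero] at h
  apply h.congr'
  filter_upwards [eventually_ge_atTop 1] with n hn
  have hn0 : (n : ℝ) ≠ 0 := by positivity
  have hR0 : (R : ℝ) ≠ 0 := by positivity
  have hkey : (R : ℝ) * ((n / R : ℕ) : ℝ) = (n : ℝ) - ((n % R : ℕ) : ℝ) := by
    have h0 : R * (n / R) + n % R = n := Nat.div_add_mod n R
    have h1 : ((R * (n / R) + n % R : ℕ) : ℝ) = (n : ℝ) := by exact_mod_cast congrArg (Nat.cast : ℕ → ℝ) h0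
    push_cast at h1
    linarith
  field_simp
  linear_combination (-1 : ℝ) * hkey

private lemma m_div_tendsto (R : ℕ) (hR : 2 ≤ R) :
    Tendsto (fun n : ℕ => (((n - n / R : ℕ)) : ℝ) / n) atTop (nhds (1 - 1 / R)) := by
  have h := (tendsto_const_nhds (x := (1:ℝ))).sub (div_floor_tendsto R hR)
  apply h.congr'
  filter_upwards [eventually_ge_atTop 1] with n hn
  have hn0 : (n : ℝ) ≠ 0 := by positivity
  have hq : n / R ≤ n := Nat.div_le_self n R
  rw [Nat.cast_sub hq]
  field_simp

private lemma m_atTop (R : ℕ) (hR : 2 ≤ R) :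
    Tendsto (fun n : ℕ => n - n / R) atTop atTop := by
  apply tendsto_atTop_atTop.mpr
  intro b
  refine ⟨2 * b, fun n hn => ?_⟩
  have h1 : n / R ≤ n / 2 := Nat.div_le_div_left hR (by omega)
  omega

private lemma Sprime_tendsto (R : ℕ) (hR : 2 ≤ R) :
    Tendsto (fun m : ℕ =>
        ((∑ i ∈ range R, (m.choose i : ℝ)) + ∑ i ∈ range (R - 1), (m.choose i : ℝ))
          / (m : ℝ) ^ (R - 1)) atTop (nhds (1 / (Nat.factorial (R - 1)))) := by
  have hR1 : R - 1 + 1 = R := by omega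
  have t1 : Tendsto (fun m : ℕ => (∑ i ∈ range R, (m.choose i : ℝ)) / (m : ℝ) ^ (R - 1))
      atTop (nhds (1 / (Nat.factorial (R - 1)))) := by
    have := tendsto_sum_choose_div_pow (R - 1)
    rwa [hR1] at this
  have t2 : Tendsto (fun m : ℕ => (∑ i ∈ range (R - 1), (m.choose i : ℝ)) / (m : ℝ) ^ (R - 1))
      atTop (nhds 0) := by
    have h := tendsto_finset_sum (range (R - 1))
      (fun i hi => tendsto_choose_div_pow_lt i (R - 1) (mem_range.mp hi))
    simp only [Finset.sum_const_zero] at h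
    apply h.congr
    intro m
    rw [Finset.sum_div]
  have := t1.add t2
  rw [add_zero] at this
  apply this.congr
  intro m
  rw [add_div]

theorem an_limsup (R : ℕ) (hR : 2 ≤ R) (x : ℝ) (hx : 0 < x) :
    Filter.limsup (fun n : ℕ =>
        (1 / 2 : ℝ) * (x * 2 ^ (n - n / R + 1) /
            ((∑ i ∈ Finset.range R, ((n - n / R).choose i : ℝ))
              + ∑ i ∈ Finset.range (R - 1), ((n - n / R).choose i : ℝ)))
          * (2 ^ (n / R) * ∑ i ∈ Finset.range (R + 1), (n.choose i : ℝ))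
          / ((∑ i ∈ Finset.range 2, ((n / R).choose i : ℝ)) * 2 ^ n))
      Filter.atTop
      = x * ((R : ℝ) / ((R : ℝ) - 1)) ^ (R - 1) ∧
    x * ((R : ℝ) / ((R : ℝ) - 1)) ^ (R - 1) ≤ Real.exp 1 * x := by
  have hr2 : (2 : ℝ) ≤ (R : ℝ) := by exact_mod_cast hR
  have hr0 : (R : ℝ) ≠ 0 := by linarith
  have hr1 : (R : ℝ) - 1 ≠ 0 := by linarith
  constructor
  · -- limits of the pieces
    have g1 := tendsto_sum_choose_div_pow R
    have g2 : Tendsto (fun n : ℕ =>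
        (((n - n / R : ℕ) : ℝ)) ^ (R - 1) /
          ((∑ i ∈ range R, ((n - n / R).choose i : ℝ))
            + ∑ i ∈ range (R - 1), ((n - n / R).choose i : ℝ)))
        atTop (nhds ((Nat.factorial (R - 1) : ℝ))) := by
      have h := ((Sprime_tendsto R hR).comp (m_atTop R hR)).inv₀
        (by positivity : (1 / (Nat.factorial (R - 1) : ℝ)) ≠ 0)
      rw [one_div, inv_inv] at h
      apply h.congr
      intro n
      simp only [Function.comp_apply, inv_div]
    have g3 : Tendsto (fun n : ℕ => (n : ℝ) / ((n - n / R : ℕ) : ℝ)) atTop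
        (nhds ((R : ℝ) / ((R : ℝ) - 1))) := by
      have h := (m_div_tendsto R hR).inv₀
        (by
          have : (1 : ℝ) / R ≤ 1 / 2 := by
            apply div_le_div_of_nonneg_left <;> linarith
          intro hc
          have : (1 : ℝ) - 1 / R = 0 := hc
          nlinarith)
      have hlim : ((1 : ℝ) - 1 / R)⁻¹ = (R : ℝ) / ((R : ℝ) - 1) := by
        field_simp
      rw [hlim] at h
      apply h.congr
      intro n
      rw [inv_div]
    have g3p := g3.pow (R - 1)
    have g4 : Tendsto (fun n : ℕ => (n : ℝ) / (∑ i ∈ range 2, ((n / R).choose i : ℝ))) atTop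
        (nhds (R : ℝ)) := by
      have hq : Tendsto (fun n : ℕ => ((1 : ℝ) + ((n / R : ℕ) : ℝ)) / n) atTop
          (nhds (1 / (R : ℝ))) := by
        have h := tendsto_one_div_atTop_nhds_zero_nat.add (div_floor_tendsto R hR)
        rw [zero_add] at h
        apply h.congr
        intro n
        rw [add_div, one_div]
      have h := hq.inv₀ (by positivity : (1 / (R : ℝ)) ≠ 0)
      rw [one_div, inv_inv] at h
      apply h.congr
      intro n
      rw [inv_div]
      congr 1
      simp [Finset.sum_range_succ]
    -- combine
    have hF := ((((g1.const_mul x).mul g2).mul g3p).mul g4)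
    have hval : x * (1 / (Nat.factorial R : ℝ)) * (Nat.factorial (R - 1) : ℝ)
        * ((R : ℝ) / ((R : ℝ) - 1)) ^ (R - 1) * (R : ℝ)
        = x * ((R : ℝ) / ((R : ℝ) - 1)) ^ (R - 1) := by
      have hfac : (Nat.factorial R : ℝ) = (R : ℝ) * (Nat.factorial (R - 1) : ℝ) := by
        have := Nat.mul_factorial_pred (show R ≠ 0 by omega)
        exact_mod_cast this.symm
      rw [hfac]
      have h1 : (Nat.factorial (R - 1) : ℝ) ≠ 0 := by positivity
      field_simp
    rw [hval] at hF
    -- eventual equality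
    have heq : (fun n : ℕ => x * ((∑ i ∈ range (R + 1), (n.choose i : ℝ)) / (n : ℝ) ^ R)
          * ((((n - n / R : ℕ) : ℝ)) ^ (R - 1) /
              ((∑ i ∈ range R, ((n - n / R).choose i : ℝ))
                + ∑ i ∈ range (R - 1), ((n - n / R).choose i : ℝ)))
          * ((n : ℝ) / ((n - n / R : ℕ) : ℝ)) ^ (R - 1)
          * ((n : ℝ) / (∑ i ∈ range 2, ((n / R).choose i : ℝ))))
        =ᶠ[atTop] (fun n : ℕ =>
          (1 / 2 : ℝ) * (x * 2 ^ (n - n / R + 1) /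
            ((∑ i ∈ Finset.range R, ((n - n / R).choose i : ℝ))
              + ∑ i ∈ Finset.range (R - 1), ((n - n / R).choose i : ℝ)))
          * (2 ^ (n / R) * ∑ i ∈ Finset.range (R + 1), (n.choose i : ℝ))
          / ((∑ i ∈ Finset.range 2, ((n / R).choose i : ℝ)) * 2 ^ n)) := by
      filter_upwards [eventually_ge_atTop 1] with n hn
      have hqn : n / R ≤ n := Nat.div_le_self n R
      have hm1 : 1 ≤ n - n / R := by
        have := Nat.div_lt_self (show 0 < n by omega) (show 1 < R by omega)
        omega
      set m := n - n / R with hm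
      set q := n / R with hqdef
      have hmq : m + q = n := by omega
      have hn0 : (n : ℝ) ≠ 0 := by positivity
      have hm0 : ((m : ℕ) : ℝ) ≠ 0 := by
        have : (0 : ℝ) < (m : ℝ) := by exact_mod_cast hm1
        linarith
      have hS1 : (0 : ℝ) < ∑ i ∈ range R, ((m.choose i) : ℝ) := by
        apply Finset.sum_pos' (fun i _ => by positivity)
        exact ⟨0, Finset.mem_range.mpr (by omega), by simp⟩
      have hS2 : (0 : ℝ) < ∑ i ∈ range (R - 1), ((m.choose i) : ℝ) := by
        apply Finset.sum_pos' (fun i _ => by positivity)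
        exact ⟨0, Finset.mem_range.mpr (by omega), by simp⟩
      have hS4 : (∑ i ∈ range 2, ((q.choose i) : ℝ)) = 1 + (q : ℝ) := by
        simp [Finset.sum_range_succ]
      have hS4pos : (0 : ℝ) < ∑ i ∈ range 2, ((q.choose i) : ℝ) := by
        rw [hS4]; positivity
      have hSne : (∑ i ∈ range R, ((m.choose i) : ℝ))
          + ∑ i ∈ range (R - 1), ((m.choose i) : ℝ) ≠ 0 := by positivity
      have h2 : ((2 : ℝ)) ^ (m + 1) = 2 * 2 ^ n / 2 ^ q := by
        rw [eq_div_iff (by positivity : ((2 : ℝ)) ^ q ≠ 0), ← pow_add]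
        rw [show 2 * (2 : ℝ) ^ n = 2 ^ (n + 1) by rw [pow_succ]; ring]
        congr 1
        omega
      have hnR : ((n : ℝ)) ^ R = (n : ℝ) ^ (R - 1) * n := by
        rw [← pow_succ]
        congr 1
        omega
      rw [h2, div_pow, hnR]
      field_simp
    exact (hF.congr' heq).limsup_eq
  · have hb : (R : ℝ) / ((R : ℝ) - 1) = 1 + 1 / ((R : ℝ) - 1) := by field_simp; ring
    have hle : ((R : ℝ) / ((R : ℝ) - 1)) ^ (R - 1) ≤ Real.exp 1 := by
      rw [hb]
      have h1 : (1 : ℝ) + 1 / ((R : ℝ) - 1) ≤ Real.exp (1 / ((R : ℝ) - 1)) := by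
        rw [add_comm]
        exact Real.add_one_le_exp _
      calc ((1 : ℝ) + 1 / ((R : ℝ) - 1)) ^ (R - 1)
          ≤ (Real.exp (1 / ((R : ℝ) - 1))) ^ (R - 1) := by
            have hpos : (0:ℝ) < (R : ℝ) - 1 := by linarith
            apply pow_le_pow_left₀ (by positivity) h1
        _ = Real.exp (((R - 1 : ℕ) : ℝ) * (1 / ((R : ℝ) - 1))) := by
            rw [Real.exp_nat_mul]
        _ = Real.exp 1 := by
            congr 1
            have hc : ((R - 1 : ℕ) : ℝ) = (R : ℝ) - 1 := by
              push_cast [Nat.cast_sub (show 1 ≤ R by omega)]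
              ring
            rw [hc]
            field_simp
    calc x * ((R : ℝ) / ((R : ℝ) - 1)) ^ (R - 1) ≤ x * Real.exp 1 :=
          mul_le_mul_of_nonneg_left hle (le_of_lt hx)
      _ = Real.exp 1 * x := mul_comm _ _
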